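/- Perfect security of the EHE quantum block encryption (core of Theorem 10): let f, g : (Fin n → ZMod 2) → (Fin n → ZMod 2) be bijections, and for keys k₁, k₂ : Fin n → ZMod 2 let U(k₁,k₂) = X^{g k₂} * H^{⊗n} * X^{f k₁}. Then for every complex matrix M indexed by I = (Fin n → ZMod 2) with Trace M = 1, (1/4^n) • ∑_{k₁,k₂ : I} U(k₁,k₂) * M * (U(k₁,k₂))ᴴ = (1/2^n) • 1. (Hence, for each fixed randomness (r₁,r₂), if F(·,r₁) and G(·,r₂) are permutations of the key space, the ciphertext averaged over uniformly random keys equals the totally mixed state, so the scheme E(F,G) is perfectly secure.) -/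

import Mathlib

open Matrix BigOperators

/-- The inner product `a ⊙ b = ∑ i, a i * b i` in `ZMod 2`. -/
def bdot {n : ℕ} (a b : Fin n → ZMod 2) : ZMod 2 := ∑ i, a i * b i

/-- `χ(a,b) = (-1)^(a ⊙ b)` as a complex number. -/
noncomputable def chi {n : ℕ} (a b : Fin n → ZMod 2) : ℂ :=
  if bdot a b = 1 then -1 else 1

/-- The `n`-qubit Pauli string `X^a`: `|v⟩ ↦ |v ⊕ a⟩`. -/
noncomputable def PX {n : ℕ} (a : Fin n → ZMod 2) :
    Matrix (Fin n → ZMod 2) (Fin n → ZMod 2) ℂ :=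
  fun u v => if u = v + a then 1 else 0

/-- The `n`-qubit Pauli string `Z^b`: `|v⟩ ↦ (-1)^(b ⊙ v) |v⟩`. -/
noncomputable def PZ {n : ℕ} (b : Fin n → ZMod 2) :
    Matrix (Fin n → ZMod 2) (Fin n → ZMod 2) ℂ :=
  fun u v => if u = v then chi b v else 0

/-- The `n`-qubit Hadamard transform `H^{⊗n}`. -/
noncomputable def Hn (n : ℕ) :
    Matrix (Fin n → ZMod 2) (Fin n → ZMod 2) ℂ :=
  fun u v => (Real.sqrt (2 ^ n) : ℂ)⁻¹ * chi u v

/- ### Auxiliary lemmas -/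

lemma add_add_self' {n : ℕ} (u b : Fin n → ZMod 2) : u + b + b = u := by
  funext i
  have h : ∀ x y : ZMod 2, x + y + y = x := by decide
  simpa using h (u i) (b i)

lemma padd_eq_zero_iff {n : ℕ} {u v : Fin n → ZMod 2} :
    u + v = 0 ↔ u = v := by
  constructor
  · intro h
    have h2 : u + v + v = 0 + v := by rw [h]
    rwa [add_add_self', zero_add] at h2
  · rintro rfl
    funext i
    exact (by decide : ∀ x : ZMod 2, x + x = 0) _

lemma bdot_add_left {n : ℕ} (a b c : Fin n → ZMod 2) :
    bdot (a + b) c = bdot a c + bdot b c := by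
  simp [bdot, add_mul, Finset.sum_add_distrib]

lemma bdot_add_right {n : ℕ} (a b c : Fin n → ZMod 2) :
    bdot a (b + c) = bdot a b + bdot a c := by
  simp [bdot, mul_add, Finset.sum_add_distrib]

lemma bdot_comm {n : ℕ} (a b : Fin n → ZMod 2) : bdot a b = bdot b a := by
  simp [bdot, mul_comm]

lemma chi_comm {n : ℕ} (a b : Fin n → ZMod 2) : chi a b = chi b a := by
  unfold chi; rw [bdot_comm]

lemma chi_of_sum (x y : ZMod 2) :
    (if x + y = 1 then (-1 : ℂ) else 1)
      = (if x = 1 then -1 else 1) * (if y = 1 then -1 else 1) := by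
  have h00 : ¬((0 : ZMod 2) + 0 = 1) := by decide
  have h01 : (0 : ZMod 2) + 1 = 1 := by decide
  have h10 : (1 : ZMod 2) + 0 = 1 := by decide
  have h11 : ¬((1 : ZMod 2) + 1 = 1) := by decide
  have hn : ¬((0 : ZMod 2) = 1) := by decide
  rcases (by revert x; decide : ∀ x : ZMod 2, x = 0 ∨ x = 1) x with rfl | rfl <;>
    rcases (by revert y; decide : ∀ y : ZMod 2, y = 0 ∨ y = 1) y with rfl | rfl <;>
    simp [h00, h01, h10, h11, hn]

lemma chi_add_left {n : ℕ} (a b c : Fin n → ZMod 2) :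
    chi (a + b) c = chi a c * chi b c := by
  unfold chi; rw [bdot_add_left]; exact chi_of_sum _ _

lemma chi_add_right {n : ℕ} (a b c : Fin n → ZMod 2) :
    chi a (b + c) = chi a b * chi a c := by
  unfold chi; rw [bdot_add_right]; exact chi_of_sum _ _

lemma chi_conj {n : ℕ} (a b : Fin n → ZMod 2) :
    (starRingEnd ℂ) (chi a b) = chi a b := by
  unfold chi; split <;> simp

lemma chi_zero_right {n : ℕ} (a : Fin n → ZMod 2) : chi a 0 = 1 := by
  unfold chi bdot; simp

lemma card_I (n : ℕ) : Fintype.card (Fin n → ZMod 2) = 2 ^ n := by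
  simp

lemma sum_chi {n : ℕ} (s : Fin n → ZMod 2) :
    ∑ b : Fin n → ZMod 2, chi b s = if s = 0 then (2 : ℂ) ^ n else 0 := by
  split_ifs with h
  · subst h
    simp only [chi_zero_right, Finset.sum_const, Finset.card_univ, card_I, nsmul_eq_mul,
      mul_one]
    push_cast; ring
  · obtain ⟨i, hi⟩ : ∃ i, s i ≠ 0 := by
      by_contra h'
      push_neg at h'
      exact h (funext h')
    have hsi : s i = 1 := by
      have : ∀ x : ZMod 2, x ≠ 0 → x = 1 := by decide
      exact this _ hi
    have hbe : bdot (Pi.single i 1) s = 1 := by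
      have h1 : bdot (Pi.single i 1) s = ∑ j, (if j = i then (1 : ZMod 2) else 0) * s j := by
        simp [bdot, Pi.single_apply]
      rw [h1]
      simp [Finset.sum_ite_eq', hsi]
    have hchie : chi (Pi.single i (1 : ZMod 2)) s = -1 := by
      unfold chi; rw [hbe]; simp
    have hstep : ∑ b : Fin n → ZMod 2, chi (b + Pi.single i 1) s
        = ∑ b : Fin n → ZMod 2, chi b s :=
      Fintype.sum_bijective (fun b => b + Pi.single i 1)
        (Equiv.addRight (Pi.single i (1 : ZMod 2) : Fin n → ZMod 2)).bijective _ _ (fun _ => rfl)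
    have h2 : ∑ b : Fin n → ZMod 2, chi b s = -∑ b : Fin n → ZMod 2, chi b s := by
      conv_lhs => rw [← hstep]
      simp [chi_add_left, hchie]
    have h3 := eq_neg_iff_add_eq_zero.mp h2
    exact add_self_eq_zero.mp h3

lemma sum_chi' {n : ℕ} (s : Fin n → ZMod 2) :
    ∑ b : Fin n → ZMod 2, chi s b = if s = 0 then (2 : ℂ) ^ n else 0 := by
  rw [← sum_chi s]
  exact Finset.sum_congr rfl fun b _ => chi_comm s b

lemma PX_mul_apply {n : ℕ} (a : Fin n → ZMod 2)
    (A : Matrix (Fin n → ZMod 2) (Fin n → ZMod 2) ℂ) (u p : Fin n → ZMod 2) :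
    (PX a * A) u p = A (u + a) p := by
  rw [Matrix.mul_apply, Finset.sum_eq_single (u + a)]
  · simp [PX, add_add_self']
  · intro w _ hw
    have : u ≠ w + a := fun h => hw (by rw [h, add_add_self'])
    simp [PX, this]
  · intro h; exact absurd (Finset.mem_univ _) h

lemma mul_PX_apply {n : ℕ} (a : Fin n → ZMod 2)
    (A : Matrix (Fin n → ZMod 2) (Fin n → ZMod 2) ℂ) (u p : Fin n → ZMod 2) :
    (A * PX a) u p = A u (p + a) := by
  rw [Matrix.mul_apply, Finset.sum_eq_single (p + a)]
  · simp [PX]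
  · intro w _ hw
    simp [PX, hw]
  · intro h; exact absurd (Finset.mem_univ _) h

lemma U_apply {n : ℕ} (a b u p : Fin n → ZMod 2) :
    (PX b * Hn n * PX a) u p = (Real.sqrt (2 ^ n) : ℂ)⁻¹ * chi (u + b) (p + a) := by
  rw [mul_PX_apply, PX_mul_apply]
  rfl

lemma csq {n : ℕ} :
    ((Real.sqrt (2 ^ n) : ℂ))⁻¹ * ((Real.sqrt (2 ^ n) : ℂ))⁻¹ = ((2 : ℂ) ^ n)⁻¹ := by
  rw [← mul_inv, ← Complex.ofReal_mul, Real.mul_self_sqrt (by positivity)]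
  push_cast; ring

lemma sum_shift {n : ℕ} (q : Fin n → ZMod 2) (G : (Fin n → ZMod 2) → ℂ) :
    ∑ a : Fin n → ZMod 2, G (q + a) = ∑ a : Fin n → ZMod 2, G a :=
  Fintype.sum_bijective (fun a => q + a) (Equiv.addLeft q).bijective _ _ (fun _ => rfl)

lemma key {n : ℕ} (u v : Fin n → ZMod 2)
    (M : Matrix (Fin n → ZMod 2) (Fin n → ZMod 2) ℂ) :
    ∑ a : Fin n → ZMod 2, ∑ b : Fin n → ZMod 2,
        ((PX b * Hn n * PX a) * M * (PX b * Hn n * PX a)ᴴ) u v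
      = if u = v then (2 : ℂ) ^ n * M.trace else 0 := by
  obtain ⟨c, hc⟩ : ∃ c : ℂ, c = ((Real.sqrt (2 ^ n) : ℝ) : ℂ)⁻¹ := ⟨_, rfl⟩
  have hcc : c * c = ((2 : ℂ) ^ n)⁻¹ := by rw [hc]; exact csq
  have hcstar : star c = c := by
    rw [hc]; simp [Complex.star_def, map_inv₀, Complex.conj_ofReal]
  have hent : ∀ a b : Fin n → ZMod 2,
      ((PX b * Hn n * PX a) * M * (PX b * Hn n * PX a)ᴴ) u v
        = ∑ q, ∑ p, (c * chi (u + b) (p + a)) * M p q * (c * chi (v + b) (q + a)) := by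
    intro a b
    rw [Matrix.mul_apply]
    refine Finset.sum_congr rfl fun q _ => ?_
    rw [Matrix.mul_apply, Finset.sum_mul]
    refine Finset.sum_congr rfl fun p _ => ?_
    rw [Matrix.conjTranspose_apply, U_apply, U_apply, ← hc]
    congr 1
    rw [star_mul', hcstar, Complex.star_def, chi_conj]
  have hterm : ∀ a b q p : Fin n → ZMod 2,
      (c * chi (u + b) (p + a)) * M p q * (c * chi (v + b) (q + a))
        = (c * c * (chi u (p + a) * chi v (q + a) * M p q)) * chi b (p + q) := by
    intro a b q p
    rw [chi_add_left, chi_add_left]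
    have hb : chi b (p + a) * chi b (q + a) = chi b (p + q) := by
      rw [← chi_add_right]
      congr 1
      have h : p + a + (q + a) = p + q + a + a := by ring
      rw [h, add_add_self']
    calc (c * (chi u (p + a) * chi b (p + a))) * M p q
          * (c * (chi v (q + a) * chi b (q + a)))
        = (c * c * (chi u (p + a) * chi v (q + a) * M p q))
            * (chi b (p + a) * chi b (q + a)) := by ring
      _ = _ := by rw [hb]
  calc ∑ a : Fin n → ZMod 2, ∑ b : Fin n → ZMod 2,
        ((PX b * Hn n * PX a) * M * (PX b * Hn n * PX a)ᴴ) u v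
      = ∑ a : Fin n → ZMod 2, ∑ b : Fin n → ZMod 2, ∑ q, ∑ p,
          (c * c * (chi u (p + a) * chi v (q + a) * M p q)) * chi b (p + q) := by
        refine Finset.sum_congr rfl fun a _ => Finset.sum_congr rfl fun b _ => ?_
        rw [hent a b]
        exact Finset.sum_congr rfl fun q _ => Finset.sum_congr rfl fun p _ => hterm a b q p
    _ = ∑ a : Fin n → ZMod 2, ∑ q, ∑ p,
          (c * c * (chi u (p + a) * chi v (q + a) * M p q))
            * (∑ b : Fin n → ZMod 2, chi b (p + q)) := by
        refine Finset.sum_congr rfl fun a _ => ?_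
        rw [Finset.sum_comm]
        refine Finset.sum_congr rfl fun q _ => ?_
        rw [Finset.sum_comm]
        refine Finset.sum_congr rfl fun p _ => ?_
        rw [Finset.mul_sum]
    _ = ∑ a : Fin n → ZMod 2, ∑ q, ∑ p,
          (if p = q then
            (c * c * (chi u (p + a) * chi v (q + a) * M p q)) * (2 : ℂ) ^ n else 0) := by
        refine Finset.sum_congr rfl fun a _ => Finset.sum_congr rfl fun q _ =>
          Finset.sum_congr rfl fun p _ => ?_
        rw [sum_chi, if_congr (padd_eq_zero_iff (u := p) (v := q)) rfl rfl]
        split_ifs <;> simp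
    _ = ∑ a : Fin n → ZMod 2, ∑ q,
          (c * c * (chi u (q + a) * chi v (q + a) * M q q)) * (2 : ℂ) ^ n := by
        refine Finset.sum_congr rfl fun a _ => Finset.sum_congr rfl fun q _ => ?_
        exact Finset.sum_ite_eq' Finset.univ q
          (fun p => (c * c * (chi u (p + a) * chi v (q + a) * M p q)) * (2 : ℂ) ^ n)
          |>.trans (by simp)
    _ = ∑ q : Fin n → ZMod 2,
          (c * c * M q q * (2 : ℂ) ^ n) * ∑ a : Fin n → ZMod 2, chi (u + v) (q + a) := by
        rw [Finset.sum_comm]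
        refine Finset.sum_congr rfl fun q _ => ?_
        rw [Finset.mul_sum]
        refine Finset.sum_congr rfl fun a _ => ?_
        rw [← chi_add_left]
        ring
    _ = ∑ q : Fin n → ZMod 2,
          (c * c * M q q * (2 : ℂ) ^ n) * (if u + v = 0 then (2 : ℂ) ^ n else 0) := by
        refine Finset.sum_congr rfl fun q _ => ?_
        congr 1
        rw [sum_shift q (fun x => chi (u + v) x)]
        exact sum_chi' (u + v)
    _ = if u = v then (2 : ℂ) ^ n * M.trace else 0 := by
        rw [if_congr (padd_eq_zero_iff (u := u) (v := v)) rfl rfl]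
        split_ifs with h
        · have htr : M.trace = ∑ q, M q q := by simp [Matrix.trace, Matrix.diag]
          rw [htr, Finset.mul_sum]
          refine Finset.sum_congr rfl fun q _ => ?_
          rw [hcc]
          have h2n : ((2 : ℂ) ^ n) ≠ 0 := pow_ne_zero _ two_ne_zero
          field_simp
        · simp

theorem ehe_perfect_security (n : ℕ)
    (f g : (Fin n → ZMod 2) → (Fin n → ZMod 2))
    (hf : Function.Bijective f) (hg : Function.Bijective g)
    (M : Matrix (Fin n → ZMod 2) (Fin n → ZMod 2) ℂ) (hM : M.trace = 1) :
    ((4 : ℂ) ^ n)⁻¹ • ∑ k₁ : Fin n → ZMod 2, ∑ k₂ : Fin n → ZMod 2,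
        (PX (g k₂) * Hn n * PX (f k₁)) * M * (PX (g k₂) * Hn n * PX (f k₁))ᴴ =
      ((2 : ℂ) ^ n)⁻¹ • (1 : Matrix (Fin n → ZMod 2) (Fin n → ZMod 2) ℂ) := by
  have hsum1 : ∀ (F : (Fin n → ZMod 2) → Matrix (Fin n → ZMod 2) (Fin n → ZMod 2) ℂ),
      ∑ k : Fin n → ZMod 2, F (f k) = ∑ a : Fin n → ZMod 2, F a := fun F =>
    Fintype.sum_bijective f hf (fun k => F (f k)) F (fun _ => rfl)
  have hsum2 : ∀ (F : (Fin n → ZMod 2) → Matrix (Fin n → ZMod 2) (Fin n → ZMod 2) ℂ),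
      ∑ k : Fin n → ZMod 2, F (g k) = ∑ b : Fin n → ZMod 2, F b := fun F =>
    Fintype.sum_bijective g hg (fun k => F (g k)) F (fun _ => rfl)
  have hre : ∑ k₁ : Fin n → ZMod 2, ∑ k₂ : Fin n → ZMod 2,
      (PX (g k₂) * Hn n * PX (f k₁)) * M * (PX (g k₂) * Hn n * PX (f k₁))ᴴ
      = ∑ a : Fin n → ZMod 2, ∑ b : Fin n → ZMod 2,
          (PX b * Hn n * PX a) * M * (PX b * Hn n * PX a)ᴴ := by
    rw [hsum1 (fun a => ∑ k₂ : Fin n → ZMod 2,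
      (PX (g k₂) * Hn n * PX a) * M * (PX (g k₂) * Hn n * PX a)ᴴ)]
    refine Finset.sum_congr rfl fun a _ => ?_
    exact hsum2 (fun b => (PX b * Hn n * PX a) * M * (PX b * Hn n * PX a)ᴴ)
  rw [hre]
  ext u v
  rw [Matrix.smul_apply, Matrix.smul_apply, Matrix.sum_apply]
  have hs : ∑ a : Fin n → ZMod 2,
      (∑ b : Fin n → ZMod 2, (PX b * Hn n * PX a) * M * (PX b * Hn n * PX a)ᴴ) u v
      = ∑ a : Fin n → ZMod 2, ∑ b : Fin n → ZMod 2,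
          ((PX b * Hn n * PX a) * M * (PX b * Hn n * PX a)ᴴ) u v := by
    refine Finset.sum_congr rfl fun a _ => ?_
    rw [Matrix.sum_apply]
  rw [hs, key u v M, hM]
  have h2n : ((2 : ℂ) ^ n) ≠ 0 := pow_ne_zero _ two_ne_zero
  have h4 : ((4 : ℂ) ^ n) = (2 : ℂ) ^ n * (2 : ℂ) ^ n := by
    rw [show (4 : ℂ) = 2 * 2 by norm_num, mul_pow]
  rw [Matrix.one_apply]
  simp only [smul_eq_mul]
  split_ifs with h
  · rw [h4]
    field_simp
  · simp
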